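/- Let G be a group generated by a finite set S, equipped with the word metric d_S, let H ≤ G be a subgroup, and let n be a natural number. Then H coarsely n-separates G if and only if ẽ(G,H) ≥ n. -/

import Mathlib

open Metric Set
open scoped NNReal Pointwise

/-- The closed `r`-neighbourhood `N_r(A)` of a subset `A` of a metric space. -/
def nbhd {X : Type*} [PseudoMetricSpace X] (r : ℝ≥0) (A : Set X) : Set X :=
  {x : X | ∃ a ∈ A, nndist x a ≤ r}

/-- The word length of `g` with respect to a generating set `S`: the least `n` such
that `g` is a product of `n` elements of `S ∪ S⁻¹`. -/
noncomputable def wordLength {G : Type*} [Group G] (S : Set G) (g : G) : ℕ :=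
  sInf {n : ℕ | ∃ l : List G, (∀ x ∈ l, x ∈ S ∨ x⁻¹ ∈ S) ∧ l.prod = g ∧ l.length = n}

/-- The metric on `G` is the word metric with respect to `S`. -/
def IsWordMetric {G : Type*} [Group G] [MetricSpace G] (S : Set G) : Prop :=
  ∀ g h : G, dist g h = wordLength S (g⁻¹ * h)

/-- A subset `A ⊆ G` is `H`-finite if `A ⊆ H·R` for some finite `R ⊆ G`. -/
def HFinite {G : Type*} [Group G] (H : Subgroup G) (A : Set G) : Prop :=
  ∃ R : Set G, R.Finite ∧ A ⊆ (H : Set G) * R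

/-- The coarse `r`-boundary `∂_r C := {x ∈ X \ C : d(x,C) ≤ r}`. -/
def coarseBoundary {X : Type*} [PseudoMetricSpace X] (r : ℝ≥0) (C : Set X) : Set X :=
  {x : X | x ∉ C ∧ ∃ c ∈ C, nndist x c ≤ r}

/-- `C` is an `(r,A)`-coarse complementary component of `W`:
`∂_r (C \ N_A(W)) ⊆ N_A(W)`. -/
def IsCCC {X : Type*} [PseudoMetricSpace X] (r A : ℝ≥0) (W C : Set X) : Prop :=
  coarseBoundary r (C \ nbhd A W) ⊆ nbhd A W

/-- `C` is a coarse complementary component of `W`, i.e. an `(r,A)`-coarse complementary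
component for some `r ≥ 1`, `A ≥ 0`. -/
def IsCoarseCompComplement {X : Type*} [PseudoMetricSpace X] (W C : Set X) : Prop :=
  ∃ r A : ℝ≥0, 1 ≤ r ∧ IsCCC r A W C

/-- A coarse complementary component is shallow if contained in some neighbourhood of
`W`, and deep otherwise. -/
def IsShallow {X : Type*} [PseudoMetricSpace X] (W C : Set X) : Prop :=
  ∃ R : ℝ≥0, C ⊆ nbhd R W

/-- `W` coarsely `n`-separates `X`: there are `n` deep, pairwise coarse disjoint,
coarse complementary components of `W`. -/
def CoarselySeparates {X : Type*} [PseudoMetricSpace X] (n : ℕ) (W : Set X) : Prop :=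
  ∃ C : Fin n → Set X,
    (∀ i, IsCoarseCompComplement W (C i)) ∧
    (∀ i, ¬ IsShallow W (C i)) ∧
    ∀ i j : Fin n, i ≠ j → IsShallow W (C i ∩ C j)

/-- `F_H(G)`: the subspace of `P(G) = (G → ℤ/2)` consisting of (indicator functions of)
`H`-finite subsets of `G`. -/
def hFinSupport {G : Type*} [Group G] (H : Subgroup G) :
    Submodule (ZMod 2) (G → ZMod 2) where
  carrier := {f | HFinite H {g : G | f g ≠ 0}}
  add_mem' := by
    rintro f g ⟨R, hR, hfR⟩ ⟨T, hT, hgT⟩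
    refine ⟨R ∪ T, hR.union hT, ?_⟩
    intro x hx
    rw [Set.mul_union]
    by_cases hfx : f x = 0
    · have hgx : g x ≠ 0 := by
        intro h0
        exact hx (by simp [Set.mem_setOf_eq, Pi.add_apply, hfx, h0])
      exact Or.inr (hgT hgx)
    · exact Or.inl (hfR hfx)
  zero_mem' := ⟨∅, Set.finite_empty, by intro x hx; exact absurd rfl hx⟩
  smul_mem' := by
    rintro c f ⟨R, hR, hfR⟩
    refine ⟨R, hR, ?_⟩
    intro x hx
    refine hfR ?_
    intro h0
    exact hx (by simp [Set.mem_setOf_eq, Pi.smul_apply, h0])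

/-- The right-translation action `C ↦ Cg` of `g ∈ G` on `P(G)/F_H(G)`. -/
noncomputable def etildeMap {G : Type*} [Group G] (H : Subgroup G) (g : G) :
    ((G → ZMod 2) ⧸ hFinSupport H) →ₗ[ZMod 2] ((G → ZMod 2) ⧸ hFinSupport H) :=
  Submodule.mapQ _ _ (LinearMap.funLeft (ZMod 2) (ZMod 2) (fun x : G => x * g⁻¹))
    (by
      rintro f ⟨R, hR, hfR⟩
      refine ⟨R * {g}, hR.mul (Set.finite_singleton g), ?_⟩
      intro x hx
      have hx' : f (x * g⁻¹) ≠ 0 := hx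
      obtain ⟨h, hh, t, ht, hht⟩ := hfR hx'
      refine ⟨h, hh, t * g, ⟨t, ht, g, rfl, rfl⟩, ?_⟩
      show h * (t * g) = x
      rw [← mul_assoc, show h * t = x * g⁻¹ from hht]
      exact inv_mul_cancel_right x g)

/-- The subspace of `G`-fixed vectors of `P(G)/F_H(G)`; its `ℤ/2`-dimension is the
number of relative ends `ẽ(G,H)`. -/
noncomputable def etildeFixed {G : Type*} [Group G] (H : Subgroup G) :
    Submodule (ZMod 2) ((G → ZMod 2) ⧸ hFinSupport H) where
  carrier := {v | ∀ g : G, etildeMap H g v = v}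
  add_mem' := by
    intro u v hu hv g
    rw [map_add, hu g, hv g]
  zero_mem' := by
    intro g
    exact map_zero _
  smul_mem' := by
    intro c v hv g
    rw [map_smul, hv g]

section Aux

variable {G : Type*} [Group G] {H : Subgroup G}

lemma HFinite.mono {A B : Set G} (hB : HFinite H B) (hAB : A ⊆ B) : HFinite H A := by
  obtain ⟨R, hR, hBR⟩ := hB
  exact ⟨R, hR, hAB.trans hBR⟩

lemma HFinite.union {A B : Set G} (hA : HFinite H A) (hB : HFinite H B) :
    HFinite H (A ∪ B) := by
  obtain ⟨R, hR, hAR⟩ := hA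
  obtain ⟨T, hT, hBT⟩ := hB
  refine ⟨R ∪ T, hR.union hT, ?_⟩
  rw [Set.mul_union]
  exact Set.union_subset_union hAR hBT

lemma HFinite.empty : HFinite H (∅ : Set G) :=
  ⟨∅, Set.finite_empty, by simp⟩

lemma HFinite.biUnion {ι : Type*} {t : Set ι} (ht : t.Finite) {A : ι → Set G}
    (h : ∀ i ∈ t, HFinite H (A i)) : HFinite H (⋃ i ∈ t, A i) := by
  classical
  induction t, ht using Set.Finite.induction_on with
  | empty => simpa using (HFinite.empty : HFinite H (∅ : Set G))
  | @insert a s _ _ ih =>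
    rw [Set.biUnion_insert]
    exact (h a (Set.mem_insert a s)).union
      (ih (fun i hi => h i (Set.mem_insert_of_mem a hi)))

lemma HFinite.translate {A : Set G} (hA : HFinite H A) (t : G) :
    HFinite H {x : G | x * t ∈ A} := by
  obtain ⟨R, hR, hAR⟩ := hA
  refine ⟨R * {t⁻¹}, hR.mul (Set.finite_singleton _), ?_⟩
  intro x hx
  obtain ⟨h, hh, r, hr, hhr⟩ := hAR hx
  refine ⟨h, hh, r * t⁻¹, ⟨r, hr, t⁻¹, rfl, rfl⟩, ?_⟩
  show h * (r * t⁻¹) = x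
  rw [← mul_assoc, show h * r = x * t from hhr]
  exact mul_inv_cancel_right x t

lemma mem_hFinSupport {f : G → ZMod 2} :
    f ∈ hFinSupport H ↔ HFinite H {g : G | f g ≠ 0} := Iff.rfl

lemma mem_hFinSupport_of_subset {f f' : G → ZMod 2} (hf : f ∈ hFinSupport H)
    (hsub : ∀ x, f' x ≠ 0 → f x ≠ 0) : f' ∈ hFinSupport H :=
  mem_hFinSupport.2 ((mem_hFinSupport.1 hf).mono hsub)

lemma zmod2_cases (a : ZMod 2) : a = 0 ∨ a = 1 := by revert a; decide

end Aux
section Word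

variable {G : Type*} [Group G]

lemma exists_word {S : Set G} (hSgen : Subgroup.closure S = ⊤) (g : G) :
    ∃ l : List G, (∀ x ∈ l, x ∈ S ∨ x⁻¹ ∈ S) ∧ l.prod = g := by
  have hg : g ∈ (Subgroup.closure S).toSubmonoid := by
    rw [hSgen]; trivial
  rw [Subgroup.closure_toSubmonoid] at hg
  obtain ⟨l, hl, hprod⟩ := Submonoid.exists_list_of_mem_closure hg
  refine ⟨l, fun x hx => ?_, hprod⟩
  rcases hl x hx with h | h
  · exact Or.inl h
  · exact Or.inr (Set.mem_inv.mp h)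

lemma wordLength_le {S : Set G} {g : G} {l : List G}
    (h1 : ∀ x ∈ l, x ∈ S ∨ x⁻¹ ∈ S) (h2 : l.prod = g) :
    wordLength S g ≤ l.length :=
  Nat.sInf_le ⟨l, h1, h2, rfl⟩

lemma exists_word_length {S : Set G} (hSgen : Subgroup.closure S = ⊤) (g : G) :
    ∃ l : List G, (∀ x ∈ l, x ∈ S ∨ x⁻¹ ∈ S) ∧ l.prod = g ∧
      l.length = wordLength S g := by
  obtain ⟨l, hl, hprod⟩ := exists_word hSgen g
  have : wordLength S g ∈ {n : ℕ | ∃ l : List G,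
      (∀ x ∈ l, x ∈ S ∨ x⁻¹ ∈ S) ∧ l.prod = g ∧ l.length = n} :=
    Nat.sInf_mem ⟨l.length, l, hl, hprod, rfl⟩
  exact this

lemma ball_finite {S : Set G} (hSfin : S.Finite) (hSgen : Subgroup.closure S = ⊤)
    (m : ℕ) : {g : G | wordLength S g ≤ m}.Finite := by
  classical
  have hT : (S ∪ S⁻¹).Finite := hSfin.union hSfin.inv
  haveI : Finite ↥(S ∪ S⁻¹) := hT
  have hlists : {l : List ↥(S ∪ S⁻¹) | l.length ≤ m}.Finite := List.finite_length_le _ m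
  have himg : ((fun l : List ↥(S ∪ S⁻¹) => (l.map Subtype.val).prod) ''
      {l | l.length ≤ m}).Finite := hlists.image _
  refine himg.subset ?_
  intro g hg
  obtain ⟨l, hl, hprod, hlen⟩ := exists_word_length hSgen g
  have hmem : ∀ x ∈ l, x ∈ S ∪ S⁻¹ := by
    intro x hx
    rcases hl x hx with h | h
    · exact Or.inl h
    · exact Or.inr (Set.mem_inv.mpr h)
  refine ⟨l.pmap (fun x hx => (⟨x, hx⟩ : ↥(S ∪ S⁻¹))) hmem, ?_, ?_⟩
  · simpa [Set.mem_setOf_eq, List.length_pmap, hlen] using hg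
  · show (List.map Subtype.val (l.pmap _ hmem)).prod = g
    rw [List.map_pmap]
    simpa [List.pmap_eq_map] using hprod

variable [MetricSpace G] {S : Set G}

omit [Group G] in
lemma nndist_le_iff' {x y : G} {r : ℝ≥0} : nndist x y ≤ r ↔ dist x y ≤ (r : ℝ) := by
  rw [← NNReal.coe_le_coe, coe_nndist]

lemma dist_eq_wordLength (hword : IsWordMetric S) (x y : G) :
    dist x y = wordLength S (x⁻¹ * y) := hword x y

lemma nndist_mul_gen_le_one (hword : IsWordMetric S) {s : G}
    (hs : s ∈ S ∨ s⁻¹ ∈ S) (x : G) : nndist x (x * s) ≤ 1 := by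
  rw [nndist_le_iff', dist_eq_wordLength hword]
  have h1 : wordLength S (x⁻¹ * (x * s)) ≤ 1 := by
    have : wordLength S s ≤ [s].length := wordLength_le (by simpa using hs) (by simp)
    simpa [inv_mul_cancel_left] using this
  exact_mod_cast h1.trans (le_refl 1)

lemma hfinite_nbhd (hword : IsWordMetric S) (hSfin : S.Finite)
    (hSgen : Subgroup.closure S = ⊤) {H : Subgroup G} (r : ℝ≥0) :
    HFinite H (nbhd r (H : Set G)) := by
  refine ⟨{g : G | wordLength S g ≤ ⌈(r : ℝ)⌉₊}, ball_finite hSfin hSgen _, ?_⟩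
  rintro x ⟨h, hh, hd⟩
  refine ⟨h, hh, h⁻¹ * x, ?_, mul_inv_cancel_left h x⟩
  have : dist h x ≤ (r : ℝ) := by
    rw [dist_comm]; exact nndist_le_iff'.mp hd
  rw [dist_eq_wordLength hword] at this
  have h2 : (wordLength S (h⁻¹ * x) : ℝ) ≤ (⌈(r : ℝ)⌉₊ : ℝ) := this.trans (Nat.le_ceil _)
  exact_mod_cast h2

lemma exists_nbhd_of_hfinite (hword : IsWordMetric S) {H : Subgroup G} {A : Set G}
    (hA : HFinite H A) : ∃ ρ : ℝ≥0, A ⊆ nbhd ρ (H : Set G) := by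
  classical
  obtain ⟨R, hR, hAR⟩ := hA
  set ρ : ℝ≥0 := hR.toFinset.sup (fun t : G => (wordLength S t⁻¹ : ℕ) : G → ℝ≥0) with hρ
  refine ⟨ρ, ?_⟩
  intro x hx
  obtain ⟨h, hh, t, ht, hht⟩ := hAR hx
  refine ⟨h, hh, ?_⟩
  have hx' : x⁻¹ * h = t⁻¹ := by
    have : h * t = x := hht
    rw [← this]; group
  have : nndist x h = (wordLength S t⁻¹ : ℝ≥0) := by
    rw [← NNReal.coe_inj, coe_nndist, dist_eq_wordLength hword, hx']
    simp
  rw [this, hρ]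
  exact Finset.le_sup (f := (fun t : G => (wordLength S t⁻¹ : ℕ) : G → ℝ≥0)) (hR.mem_toFinset.mpr ht)

end Word
section Quot

variable {G : Type*} [Group G] {H : Subgroup G}

lemma etildeMap_mk (g : G) (f : G → ZMod 2) :
    etildeMap H g (Submodule.Quotient.mk f) =
      Submodule.Quotient.mk (fun x => f (x * g⁻¹)) := by
  rfl

lemma etildeMap_comp (a b : G) (v : (G → ZMod 2) ⧸ hFinSupport H) :
    etildeMap H a (etildeMap H b v) = etildeMap H (b * a) v := by
  obtain ⟨f, rfl⟩ := Submodule.Quotient.mk_surjective _ v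
  rw [etildeMap_mk, etildeMap_mk, etildeMap_mk]
  congr 1
  funext x
  rw [mul_inv_rev, mul_assoc]

lemma etildeMap_one (v : (G → ZMod 2) ⧸ hFinSupport H) : etildeMap H 1 v = v := by
  obtain ⟨f, rfl⟩ := Submodule.Quotient.mk_surjective _ v
  rw [etildeMap_mk]
  congr 1
  funext x
  rw [inv_one, mul_one]

lemma mem_etildeFixed_iff {v : (G → ZMod 2) ⧸ hFinSupport H} :
    v ∈ etildeFixed H ↔ ∀ g : G, etildeMap H g v = v := Iff.rfl

lemma fixed_of_gen {S : Set G} (hSgen : Subgroup.closure S = ⊤)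
    {v : (G → ZMod 2) ⧸ hFinSupport H} (hv : ∀ s ∈ S, etildeMap H s v = v) :
    v ∈ etildeFixed H := by
  let Γ : Subgroup G :=
    { carrier := {g : G | etildeMap H g v = v}
      one_mem' := etildeMap_one v
      mul_mem' := by
        intro a b ha hb
        show etildeMap H (a * b) v = v
        rw [← etildeMap_comp b a v, ha, hb]
      inv_mem' := by
        intro g hg
        show etildeMap H g⁻¹ v = v
        conv_lhs => rw [← hg]
        rw [etildeMap_comp, mul_inv_cancel, etildeMap_one] }
  have : Subgroup.closure S ≤ Γ := (Subgroup.closure_le Γ).mpr hv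
  intro g
  exact this (hSgen ▸ Subgroup.mem_top g)

lemma mk_mem_etildeFixed_iff {f : G → ZMod 2} :
    (Submodule.Quotient.mk f : (G → ZMod 2) ⧸ hFinSupport H) ∈ etildeFixed H ↔
      ∀ g : G, ((fun x => f (x * g)) - f) ∈ hFinSupport H := by
  constructor
  · intro hfix g
    have := hfix g⁻¹
    rw [etildeMap_mk, Submodule.Quotient.eq] at this
    simpa using this
  · intro hdiff g
    rw [etildeMap_mk, Submodule.Quotient.eq]
    exact hdiff g⁻¹

variable [MetricSpace G] {S : Set G}

lemma isShallow_iff_hfinite (hword : IsWordMetric S) (hSfin : S.Finite)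
    (hSgen : Subgroup.closure S = ⊤) {C : Set G} :
    IsShallow (H : Set G) C ↔ HFinite H C := by
  constructor
  · rintro ⟨R, hR⟩
    exact (hfinite_nbhd hword hSfin hSgen R).mono hR
  · intro hC
    obtain ⟨ρ, hρ⟩ := exists_nbhd_of_hfinite hword hC
    exact ⟨ρ, hρ⟩

omit [MetricSpace G] in
lemma prod_diff_mem {ι : Type*} (s : Finset ι) (p q : ι → (G → ZMod 2))
    (h : ∀ i ∈ s, p i - q i ∈ hFinSupport H) :
    (∏ i ∈ s, p i) - (∏ i ∈ s, q i) ∈ hFinSupport H := by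
  classical
  induction s using Finset.induction_on with
  | empty => simpa using (hFinSupport H).zero_mem
  | @insert a s ha ih =>
    rw [Finset.prod_insert ha, Finset.prod_insert ha]
    have key : p a * (∏ i ∈ s, p i) - q a * (∏ i ∈ s, q i) =
        p a * ((∏ i ∈ s, p i) - (∏ i ∈ s, q i)) + (p a - q a) * (∏ i ∈ s, q i) := by
      ring
    rw [key]
    refine (hFinSupport H).add_mem ?_ ?_
    · refine mem_hFinSupport_of_subset (ih (fun i hi => h i (Finset.mem_insert_of_mem hi))) ?_
      intro x hx h0
      apply hx
      show p a x * ((∏ i ∈ s, p i) - (∏ i ∈ s, q i)) x = 0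
      rw [h0, mul_zero]
    · refine mem_hFinSupport_of_subset (h a (Finset.mem_insert_self a s)) ?_
      intro x hx h0
      apply hx
      show (p a - q a) x * (∏ i ∈ s, q i) x = 0
      rw [h0, zero_mul]

end Quot
section Key

variable {G : Type*} [Group G] [MetricSpace G] {S : Set G} {H : Subgroup G}

lemma isCoarseComp_of_fixed (hword : IsWordMetric S) (hSfin : S.Finite)
    (hSgen : Subgroup.closure S = ⊤) {f : G → ZMod 2}
    (hf : ∀ g : G, ((fun x => f (x * g)) - f) ∈ hFinSupport H) :
    IsCoarseCompComplement (H : Set G) {x | f x ≠ 0} := by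
  classical
  have hSymfin : (S ∪ S⁻¹).Finite := hSfin.union hSfin.inv
  have hE : HFinite H (⋃ s ∈ S ∪ S⁻¹, {x : G | ((fun y => f (y * s)) - f) x ≠ 0}) :=
    HFinite.biUnion hSymfin (fun s _ => hf s)
  obtain ⟨ρ, hρ⟩ := exists_nbhd_of_hfinite hword hE
  refine ⟨1, ρ, le_refl 1, ?_⟩
  rintro x ⟨hxnot, c, hc, hdist⟩
  by_cases hxin : x ∈ nbhd ρ (H : Set G)
  · exact hxin
  have hxC : ¬ f x ≠ 0 := fun h => hxnot ⟨h, hxin⟩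
  have hfx : f x = 0 := not_not.mp hxC
  have hd : dist x c ≤ (1 : ℝ) := by
    rw [← NNReal.coe_one]; exact nndist_le_iff'.mp hdist
  rw [dist_eq_wordLength hword] at hd
  have hwl : wordLength S (x⁻¹ * c) ≤ 1 := by exact_mod_cast hd
  obtain ⟨l, hl, hprod, hlen⟩ := exists_word_length hSgen (x⁻¹ * c)
  rcases l with _ | ⟨s, _ | ⟨t, l⟩⟩
  · have : c = x := by
      have : (1 : G) = x⁻¹ * c := by simpa using hprod
      exact (inv_mul_eq_one.mp this.symm).symm
    exact absurd (this ▸ hc.1) hxC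
  · have hcs : c = x * s := by
      have : s = x⁻¹ * c := by simpa using hprod
      rw [this, mul_inv_cancel_left]
    have hs : s ∈ S ∪ S⁻¹ := by
      rcases hl s (by simp) with h | h
      · exact Or.inl h
      · exact Or.inr (Set.mem_inv.mpr h)
    have hx' : x ∈ {y : G | ((fun z => f (z * s)) - f) y ≠ 0} := by
      have : f (x * s) ≠ 0 := hcs ▸ hc.1
      simp only [Set.mem_setOf_eq, Pi.sub_apply, hfx, sub_zero]
      exact this
    exact hρ (Set.mem_biUnion hs hx')
  · exfalso
    rw [← hlen] at hwl
    simp at hwl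

lemma gen_diff_of_isCCC (hword : IsWordMetric S) (hSfin : S.Finite)
    (hSgen : Subgroup.closure S = ⊤) {r A : ℝ≥0} (hr : 1 ≤ r) {C : Set G}
    (hCCC : IsCCC r A (H : Set G) C) {s : G} (hs : s ∈ S ∨ s⁻¹ ∈ S) :
    ((fun x => (C \ nbhd A (H : Set G)).indicator (fun _ => (1 : ZMod 2)) (x * s)) -
      (C \ nbhd A (H : Set G)).indicator (fun _ => (1 : ZMod 2))) ∈ hFinSupport H := by
  classical
  set D : Set G := C \ nbhd A (H : Set G) with hD
  set ind : G → ZMod 2 := D.indicator (fun _ => (1 : ZMod 2)) with hind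
  have hbig : HFinite H (nbhd A (H : Set G) ∪ {x : G | x * s ∈ nbhd A (H : Set G)}) :=
    (hfinite_nbhd hword hSfin hSgen A).union
      ((hfinite_nbhd hword hSfin hSgen A).translate s)
  refine mem_hFinSupport.2 (hbig.mono ?_)
  intro x hx
  have hx' : ind (x * s) - ind x ≠ 0 := hx
  by_cases hxD : x ∈ D
  · have h1 : ind x = 1 := Set.indicator_of_mem hxD _
    have hxs : x * s ∉ D := by
      intro hmem
      exact hx' (by rw [show ind (x * s) = 1 from Set.indicator_of_mem hmem _, h1, sub_self])
    have hs' : s⁻¹ ∈ S ∨ (s⁻¹)⁻¹ ∈ S := by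
      rcases hs with h | h
      · exact Or.inr (by rwa [inv_inv])
      · exact Or.inl h
    have hnd : nndist (x * s) x ≤ r := by
      have := nndist_mul_gen_le_one hword hs' (x * s)
      rw [mul_assoc, mul_inv_cancel, mul_one] at this
      exact this.trans hr
    have : x * s ∈ coarseBoundary r D := ⟨hxs, x, hxD, hnd⟩
    exact Or.inr (hCCC this)
  · have h0 : ind x = 0 := Set.indicator_of_notMem hxD _
    have hxs : x * s ∈ D := by
      by_contra hmem
      exact hx' (by rw [show ind (x * s) = 0 from Set.indicator_of_notMem hmem _, h0, sub_self])
    have hnd : nndist x (x * s) ≤ r :=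
      (nndist_mul_gen_le_one hword hs x).trans hr
    have : x ∈ coarseBoundary r D := ⟨hxD, x * s, hxs, hnd⟩
    exact Or.inl (hCCC this)

lemma mk_indicator_mem_fixed (hword : IsWordMetric S) (hSfin : S.Finite)
    (hSgen : Subgroup.closure S = ⊤) {r A : ℝ≥0} (hr : 1 ≤ r) {C : Set G}
    (hCCC : IsCCC r A (H : Set G) C) :
    (Submodule.Quotient.mk ((C \ nbhd A (H : Set G)).indicator (fun _ => (1 : ZMod 2))) :
      (G → ZMod 2) ⧸ hFinSupport H) ∈ etildeFixed H := by
  refine fixed_of_gen hSgen ?_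
  intro s hsS
  rw [etildeMap_mk, Submodule.Quotient.eq]
  exact gen_diff_of_isCCC hword hSfin hSgen hr hCCC
    (Or.inr (by rwa [inv_inv]))

end Key
section Main

variable {G : Type*} [Group G] [MetricSpace G]

lemma nbhd_mono_radius {X : Type*} [PseudoMetricSpace X] {r r' : ℝ≥0} (h : r ≤ r')
    (A : Set X) : nbhd r A ⊆ nbhd r' A := by
  rintro x ⟨a, ha, hd⟩
  exact ⟨a, ha, hd.trans h⟩

lemma separates_to_rank {S : Set G} (hSfin : S.Finite) (hSgen : Subgroup.closure S = ⊤)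
    (hword : IsWordMetric S) (H : Subgroup G) (n : ℕ)
    (hsep : CoarselySeparates n (H : Set G)) :
    (n : Cardinal) ≤ Module.rank (ZMod 2) ↥(etildeFixed H) := by
  classical
  obtain ⟨C, hcomp, hdeep, hdisj⟩ := hsep
  choose r A hr hCCC using hcomp
  set D : Fin n → Set G := fun i => C i \ nbhd (A i) (H : Set G) with hDdef
  set f : Fin n → (G → ZMod 2) := fun i => (D i).indicator (fun _ => (1 : ZMod 2)) with hfdef
  have hfix : ∀ i, (Submodule.Quotient.mk (f i) : (G → ZMod 2) ⧸ hFinSupport H) ∈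
      etildeFixed H := fun i => mk_indicator_mem_fixed hword hSfin hSgen (hr i) (hCCC i)
  have hsupp_eq : ∀ i, {x : G | f i x ≠ 0} = D i := by
    intro i
    ext x
    by_cases hx : x ∈ D i <;>
      simp [hfdef, Set.indicator_of_mem, Set.indicator_of_notMem, hx]
  have hnz : ∀ i, f i ∉ hFinSupport H := by
    intro i hmem
    apply hdeep i
    have hDfin : HFinite H (D i) := by
      rw [mem_hFinSupport, hsupp_eq i] at hmem
      exact hmem
    obtain ⟨ρ, hρ⟩ := exists_nbhd_of_hfinite hword hDfin
    refine ⟨max ρ (A i), ?_⟩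
    intro x hxC
    by_cases hxn : x ∈ nbhd (A i) (H : Set G)
    · exact nbhd_mono_radius (le_max_right _ _) _ hxn
    · exact nbhd_mono_radius (le_max_left _ _) _ (hρ ⟨hxC, hxn⟩)
  have hind : LinearIndependent (ZMod 2)
      (fun i : Fin n => (Submodule.Quotient.mk (f i) : (G → ZMod 2) ⧸ hFinSupport H)) := by
    rw [Fintype.linearIndependent_iff]
    intro c hsum j
    by_contra hcj
    have hcj1 : c j = 1 := (zmod2_cases (c j)).resolve_left hcj
    have hsum' : (∑ i, c i • f i) ∈ hFinSupport H := by
      rw [← Submodule.Quotient.mk_eq_zero]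
      show (hFinSupport H).mkQ (∑ i, c i • f i) = 0
      rw [map_sum]
      simp only [map_smul, Submodule.mkQ_apply]
      exact hsum
    have h1 : f j * (∑ i, c i • f i) ∈ hFinSupport H :=
      mem_hFinSupport_of_subset hsum' (fun x hx h0 => hx (by
        show f j x * (∑ i, c i • f i) x = 0
        rw [h0, mul_zero]))
    have h2 : f j - f j * (∑ i, c i • f i) ∈ hFinSupport H := by
      have hUfin : HFinite H
          (⋃ i ∈ (↑(Finset.univ.erase j) : Set (Fin n)), (D j ∩ D i)) := by
        refine HFinite.biUnion (Finset.finite_toSet _) ?_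
        intro i hi
        have hij : i ≠ j := (Finset.mem_erase.mp (Finset.mem_coe.mp hi)).1
        have hsh : IsShallow (H : Set G) (C j ∩ C i) := hdisj j i (Ne.symm hij)
        have : HFinite H (C j ∩ C i) :=
          (isShallow_iff_hfinite hword hSfin hSgen).mp hsh
        exact this.mono (Set.inter_subset_inter Set.diff_subset Set.diff_subset)
      refine mem_hFinSupport.2 (hUfin.mono ?_)
      intro x hx
      by_contra hnot
      have hxDj : x ∈ D j := by
        by_contra hD
        apply hx
        have hz : f j x = 0 := by rw [← hsupp_eq j] at hD; simpa using hD
        show f j x - f j x * (∑ i, c i • f i) x = 0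
        rw [hz, zero_mul, sub_zero]
      have hfjx : f j x = 1 := Set.indicator_of_mem hxDj _
      have hzero : ∀ i, i ≠ j → f i x = 0 := by
        intro i hij
        have hxDi : x ∉ D i := fun hDi => hnot
          (Set.mem_biUnion (Finset.mem_coe.mpr
            (Finset.mem_erase.mpr ⟨hij, Finset.mem_univ i⟩)) ⟨hxDj, hDi⟩)
        exact Set.indicator_of_notMem hxDi _
      have hhx : (∑ i, c i • f i) x = 1 := by
        rw [Finset.sum_apply]
        rw [Finset.sum_eq_single j]
        · simp [hcj1, hfjx]
        · intro i _ hij; simp [hzero i hij]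
        · intro hj; exact absurd (Finset.mem_univ j) hj
      apply hx
      show f j x - f j x * (∑ i, c i • f i) x = 0
      rw [hfjx, hhx]; ring
    have hfj : f j ∈ hFinSupport H := by
      have hadd := (hFinSupport H).add_mem h1 h2
      have heq : f j * (∑ i, c i • f i) + (f j - f j * (∑ i, c i • f i)) = f j := by ring
      rwa [heq] at hadd
    exact hnz j hfj
  have hind2 : LinearIndependent (ZMod 2)
      (fun i : Fin n => (⟨Submodule.Quotient.mk (f i), hfix i⟩ : ↥(etildeFixed H))) := by
    apply LinearIndependent.of_comp (etildeFixed H).subtype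
    exact hind
  simpa using hind2.cardinal_lift_le_rank

end Main
section Gfun

variable {G : Type*} [Group G] {H : Subgroup G} {n : ℕ}

/-- The "atom" function associated to a sign pattern `v` and functions `f i`. -/
def gfun (f : Fin n → (G → ZMod 2)) (v : Fin n → Bool) : G → ZMod 2 :=
  ∏ i, (if v i then f i else 1 - f i)

lemma gfun_apply (f : Fin n → (G → ZMod 2)) (v : Fin n → Bool) (x : G) :
    gfun f v x = ∏ i, (if v i then f i x else 1 - f i x) := by
  show (∏ i, (if v i then f i else 1 - f i)) x = _
  rw [Finset.prod_apply]
  refine Finset.prod_congr rfl ?_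
  intro i _
  by_cases hv : v i <;> simp [hv]

lemma gfun_eq_one {f : Fin n → (G → ZMod 2)} {v : Fin n → Bool} {x : G}
    (h : ∀ i, f i x = (if v i then 1 else 0)) : gfun f v x = 1 := by
  rw [gfun_apply]
  refine Finset.prod_eq_one ?_
  intro i _
  by_cases hv : v i
  · rw [if_pos hv, h i, if_pos hv]
  · rw [if_neg hv, h i, if_neg hv, sub_zero]

lemma gfun_eq_zero {f : Fin n → (G → ZMod 2)} {v : Fin n → Bool} {x : G} {i : Fin n}
    (h : f i x ≠ (if v i then 1 else 0)) : gfun f v x = 0 := by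
  rw [gfun_apply]
  refine Finset.prod_eq_zero (Finset.mem_univ i) ?_
  by_cases hv : v i
  · rw [if_pos hv]
    rw [if_pos hv] at h
    exact (zmod2_cases (f i x)).resolve_right h
  · rw [if_neg hv]
    rw [if_neg hv] at h
    rw [(zmod2_cases (f i x)).resolve_left h, sub_self]

lemma gfun_forall_of_ne_zero {f : Fin n → (G → ZMod 2)} {v : Fin n → Bool} {x : G}
    (hx : gfun f v x ≠ 0) : ∀ i, f i x = (if v i then 1 else 0) := by
  intro i
  by_contra h
  exact hx (gfun_eq_zero h)

lemma gfun_sum (f : Fin n → (G → ZMod 2)) (i : Fin n) (x : G) :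
    (∑ v : Fin n → Bool, if v i then gfun f v x else 0) = f i x := by
  classical
  set v₀ : Fin n → Bool := fun j => decide (f j x = 1) with hv₀
  have hv₀spec : ∀ j, f j x = (if v₀ j then 1 else 0) := by
    intro j
    rcases zmod2_cases (f j x) with h | h <;> simp [hv₀, h]
  rw [Finset.sum_eq_single v₀]
  · rcases zmod2_cases (f i x) with h | h
    · have hfalse : v₀ i = false := by simp [hv₀, h]
      rw [hfalse]
      simp [h]
    · have htrue : v₀ i = true := by simp [hv₀, h]
      rw [htrue]
      simp [gfun_eq_one hv₀spec, h]
  · intro v _ hv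
    by_cases hvi : v i
    · rw [if_pos hvi]
      obtain ⟨j, hj⟩ := Function.ne_iff.mp hv
      refine gfun_eq_zero (i := j) ?_
      rw [hv₀spec j]
      rcases Bool.eq_false_or_eq_true (v j) with hbv | hbv <;>
        rcases Bool.eq_false_or_eq_true (v₀ j) with hb0 | hb0 <;>
        rw [hbv, hb0] <;> simp_all
    · rw [if_neg hvi]
  · intro hn; exact absurd (Finset.mem_univ v₀) hn

lemma gfun_mul_eq_zero {f : Fin n → (G → ZMod 2)} {v w : Fin n → Bool} (hvw : v ≠ w)
    {x : G} (hv : gfun f v x ≠ 0) : gfun f w x = 0 := by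
  obtain ⟨j, hj⟩ := Function.ne_iff.mp hvw
  refine gfun_eq_zero (i := j) ?_
  rw [gfun_forall_of_ne_zero hv j]
  rcases Bool.eq_false_or_eq_true (v j) with hbv | hbv <;>
    rcases Bool.eq_false_or_eq_true (w j) with hb0 | hb0 <;>
    rw [hbv, hb0] <;> simp_all

lemma gfun_fixed {f : Fin n → (G → ZMod 2)}
    (hf : ∀ i (g : G), ((fun x => f i (x * g)) - f i) ∈ hFinSupport H)
    (v : Fin n → Bool) (g : G) :
    ((fun x => gfun f v (x * g)) - gfun f v) ∈ hFinSupport H := by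
  have heq : (fun x => gfun f v (x * g)) =
      ∏ i, (fun x => (if v i then f i else 1 - f i) (x * g)) := by
    funext x
    rw [Finset.prod_apply]
    exact gfun_apply f v (x * g) |>.trans (Finset.prod_congr rfl (fun i _ => by
      by_cases hv : v i <;> simp [hv]))
  have heq2 : gfun f v = ∏ i, (if v i then f i else 1 - f i) := rfl
  rw [heq, heq2]
  refine prod_diff_mem Finset.univ _ _ ?_
  intro i _
  by_cases hv : v i
  · simpa [hv] using hf i g
  · have hneg : (fun x => (if v i then f i else 1 - f i) (x * g)) -
        (if v i then f i else 1 - f i) = -((fun x => f i (x * g)) - f i) := by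
      funext x
      simp only [if_neg hv, Pi.sub_apply, Pi.neg_apply, Pi.one_apply]
      ring
    rw [hneg]
    exact (hFinSupport H).neg_mem (hf i g)

end Gfun
section Backward

variable {G : Type*} [Group G] [MetricSpace G]

lemma rank_to_separates {S : Set G} (hSfin : S.Finite) (hSgen : Subgroup.closure S = ⊤)
    (hword : IsWordMetric S) (H : Subgroup G) (n : ℕ)
    (hrank : (n : Cardinal) ≤ Module.rank (ZMod 2) ↥(etildeFixed H)) :
    CoarselySeparates n (H : Set G) := by
  classical
  haveI : Fact (Nat.Prime 2) := ⟨Nat.prime_two⟩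
  haveI : Module.Free (ZMod 2) ↥(etildeFixed H) := Module.Free.of_divisionRing _ _
  obtain ⟨s, hcard, hliset⟩ := le_rank_iff_exists_linearIndependent_finset.mp hrank
  -- extract an independent family indexed by `Fin n`
  set ψ : Fin n → ↥((s : Set ↥(etildeFixed H))) := fun i =>
    ⟨(s.equivFin.symm (Fin.cast hcard.symm i) : ↥(etildeFixed H)),
      Finset.mem_coe.mpr (s.equivFin.symm (Fin.cast hcard.symm i)).2⟩ with hψ
  have hψinj : Function.Injective ψ := by
    intro a b hab
    have h1 : s.equivFin.symm (Fin.cast hcard.symm a) =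
        s.equivFin.symm (Fin.cast hcard.symm b) :=
      Subtype.ext (congrArg Subtype.val hab)
    have h2 := s.equivFin.symm.injective h1
    have h3 : (Fin.cast hcard.symm a : ℕ) = (Fin.cast hcard.symm b : ℕ) :=
      congrArg Fin.val h2
    exact Fin.val_injective h3
  set u : Fin n → ↥(etildeFixed H) := fun i => (ψ i : ↥(etildeFixed H)) with hu
  have huind : LinearIndependent (ZMod 2) u := hliset.comp ψ hψinj
  set Q := (G → ZMod 2) ⧸ hFinSupport H with hQ
  set q : Fin n → Q := fun i => ((u i : ↥(etildeFixed H)) : Q) with hq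
  have hqind : LinearIndependent (ZMod 2) q :=
    huind.map' (etildeFixed H).subtype (Submodule.ker_subtype _)
  -- lift to functions
  have hlift : ∀ i, ∃ g : G → ZMod 2, Submodule.Quotient.mk g = q i :=
    fun i => Submodule.Quotient.mk_surjective _ _
  choose f hf using hlift
  have hfixf : ∀ i (g : G), ((fun x => f i (x * g)) - f i) ∈ hFinSupport H := by
    intro i
    refine mk_mem_etildeFixed_iff.mp ?_
    rw [hf i]
    exact (u i).2
  have hgfix : ∀ v (g : G),
      ((fun x => gfun f v (x * g)) - gfun f v) ∈ hFinSupport H :=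
    fun v g => gfun_fixed hfixf v g
  -- the finset of sign patterns with nonzero class
  set T : Finset (Fin n → Bool) := Finset.univ.filter
    (fun v => (Submodule.Quotient.mk (gfun f v) : Q) ≠ 0) with hT
  -- each q i lies in the span of the classes of atoms in T
  have hfi_sum : ∀ i, f i = ∑ v : Fin n → Bool, (if v i then gfun f v else 0) := by
    intro i
    funext x
    rw [Finset.sum_apply]
    rw [← gfun_sum f i x]
    refine Finset.sum_congr rfl ?_
    intro v _
    by_cases hv : v i <;> simp [hv]
  set W : Submodule (ZMod 2) Q := Submodule.span (ZMod 2)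
    (↑(T.image (fun v => (Submodule.Quotient.mk (gfun f v) : Q))) : Set Q) with hW
  have hspan : ∀ i, q i ∈ W := by
    intro i
    rw [← hf i, hfi_sum i]
    have : (Submodule.Quotient.mk (∑ v : Fin n → Bool, (if v i then gfun f v else 0)) : Q)
        = ∑ v : Fin n → Bool, (if v i then (Submodule.Quotient.mk (gfun f v) : Q) else 0) := by
      show (hFinSupport H).mkQ _ = _
      rw [map_sum]
      refine Finset.sum_congr rfl ?_
      intro v _
      by_cases hv : v i <;> simp [hv]
    rw [this]
    refine Submodule.sum_mem _ ?_
    intro v _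
    by_cases hv : v i
    · rw [if_pos hv]
      by_cases hz : (Submodule.Quotient.mk (gfun f v) : Q) = 0
      · rw [hz]; exact W.zero_mem
      · refine Submodule.subset_span ?_
        refine Finset.mem_coe.mpr (Finset.mem_image.mpr ⟨v, ?_, rfl⟩)
        exact Finset.mem_filter.mpr ⟨Finset.mem_univ v, hz⟩
    · rw [if_neg hv]; exact W.zero_mem
  -- counting : n ≤ T.card
  have hwind : LinearIndependent (ZMod 2) (fun i : Fin n => (⟨q i, hspan i⟩ : ↥W)) := by
    apply LinearIndependent.of_comp W.subtype
    exact hqind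
  have hn_le : (n : Cardinal) ≤ Module.rank (ZMod 2) ↥W := by
    simpa using hwind.cardinal_lift_le_rank
  have hrankW : Module.rank (ZMod 2) ↥W ≤ (T.card : Cardinal) := by
    refine (rank_span_le _).trans ?_
    rw [Finset.coe_sort_coe, Cardinal.mk_coe_finset]
    exact_mod_cast Finset.card_image_le
  have hnT : n ≤ T.card := by
    exact_mod_cast hn_le.trans hrankW
  obtain ⟨t, hts, htcard⟩ := Finset.exists_subset_card_eq hnT
  set ww : Fin n → (Fin n → Bool) := fun i =>
    (t.equivFin.symm (Fin.cast htcard.symm i) : Fin n → Bool) with hww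
  have hwwinj : Function.Injective ww := by
    intro a b hab
    have h1 : t.equivFin.symm (Fin.cast htcard.symm a) =
        t.equivFin.symm (Fin.cast htcard.symm b) := Subtype.ext hab
    have h2 := t.equivFin.symm.injective h1
    have h3 : (Fin.cast htcard.symm a : ℕ) = (Fin.cast htcard.symm b : ℕ) :=
      congrArg Fin.val h2
    exact Fin.val_injective h3
  have hwwT : ∀ i, ww i ∈ T := fun i => hts (t.equivFin.symm (Fin.cast htcard.symm i)).2
  -- the components
  refine ⟨fun i => {x : G | gfun f (ww i) x ≠ 0}, ?_, ?_, ?_⟩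
  · intro i
    exact isCoarseComp_of_fixed hword hSfin hSgen (hgfix (ww i))
  · intro i hsh
    have hfin : HFinite H {x : G | gfun f (ww i) x ≠ 0} :=
      (isShallow_iff_hfinite hword hSfin hSgen).mp hsh
    have : (Submodule.Quotient.mk (gfun f (ww i)) : Q) = 0 :=
      (Submodule.Quotient.mk_eq_zero _).mpr (mem_hFinSupport.mpr hfin)
    exact (Finset.mem_filter.mp (hwwT i)).2 this
  · intro i j hij
    have hempty : {x : G | gfun f (ww i) x ≠ 0} ∩ {x : G | gfun f (ww j) x ≠ 0} = ∅ := by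
      ext x
      simp only [Set.mem_inter_iff, Set.mem_setOf_eq, Set.mem_empty_iff_false, iff_false,
        not_and]
      intro hxi hxj
      exact hxj (gfun_mul_eq_zero (fun h => hij (hwwinj h)) hxi)
    rw [hempty]
    exact ⟨0, Set.empty_subset _⟩

end Backward
/-- Let `G` be a group with the word metric with respect to a finite
generating set `S`, `H ≤ G` a subgroup, and `n : ℕ`. Then `H` coarsely `n`-separates
`G` iff the number of relative ends `ẽ(G,H)`, i.e. the `ℤ/2`-dimension of the space of
`G`-fixed vectors of `P(G)/F_H(G)`, is at least `n`. -/
theorem coarselySeparates_iff_relative_ends {G : Type*} [Group G] [MetricSpace G]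
    (S : Set G) (hSfin : S.Finite) (hSgen : Subgroup.closure S = ⊤)
    (hword : IsWordMetric S) (H : Subgroup G) (n : ℕ) :
    CoarselySeparates n (H : Set G) ↔
      (n : Cardinal) ≤ Module.rank (ZMod 2) ↥(etildeFixed H) := by
  constructor
  · exact separates_to_rank hSfin hSgen hword H n
  · exact rank_to_separates hSfin hSgen hword H n
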